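/- Let f : ℝ^d × ℝ^d → ℝ^d and g : ℝ^d × ℝ^d → ℝ^{d×l} with f anti-symmetric. Assume, for constants L ≥ 0 and ρ ≥ 2: (i) ⟨x-y, f(x,y)⟩ + 2(ρ-1)|g(x,y)|² ≤ L(1 + |x-y|²) for all x,y; (ii) (|x|^{ρ-2} - |y|^{ρ-2})⟨x+y, f(x,y)⟩ ≤ L(|x|^ρ + |y|^ρ) for all x,y. Then there exists a constant C > 0 depending only on L and ρ such that for all N ∈ ℕ and all x¹,…,x^N ∈ ℝ^d, (1/N²) Σ_{i,j=1}^N |x^i|^{ρ-2} ( ⟨x^i, f(x^i,x^j)⟩ + (ρ-1)|g(x^i,x^j)|² ) ≤ C (1 + (1/N) Σ_{i=1}^N |x^i|^{ρ} ). -/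

import Mathlib

open RealInnerProductSpace

-- auxiliary scalar lemmas
lemma aux_rpow_mul_sq (ρ s : ℝ) (hρ : 2 ≤ ρ) (hs : 0 ≤ s) :
    s ^ (ρ - 2) * s ^ 2 = s ^ ρ := by
  have h2 : s ^ (2:ℝ) = s ^ (2:ℕ) := by
    rw [← Real.rpow_natCast]; norm_num
  rw [← h2, ← Real.rpow_add' hs (by intro h; nlinarith)]
  norm_num

lemma aux_rpow_le_one_add (ρ s : ℝ) (hρ : 2 ≤ ρ) (hs : 0 ≤ s) :
    s ^ (ρ - 2) ≤ 1 + s ^ ρ := by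
  rcases le_total s 1 with h | h
  · linarith [Real.rpow_le_one hs h (by linarith : (0:ℝ) ≤ ρ - 2), Real.rpow_nonneg hs ρ]
  · linarith [Real.rpow_le_rpow_of_exponent_le h (by linarith : ρ - 2 ≤ ρ),
      Real.rpow_nonneg hs ρ]

lemma aux_rpow_mul_sq_le (ρ s t : ℝ) (hρ : 2 ≤ ρ) (hs : 0 ≤ s) (ht : 0 ≤ t) :
    s ^ (ρ - 2) * t ^ 2 ≤ s ^ ρ + t ^ ρ := by
  rcases le_total s t with h | h
  · have h1 : s ^ (ρ - 2) ≤ t ^ (ρ - 2) := Real.rpow_le_rpow hs h (by linarith)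
    have h2 : t ^ (ρ - 2) * t ^ 2 = t ^ ρ := aux_rpow_mul_sq ρ t hρ ht
    nlinarith [Real.rpow_nonneg hs ρ, sq_nonneg t]
  · have h1 : t ^ 2 ≤ s ^ 2 := by nlinarith
    have h2 : s ^ (ρ - 2) * s ^ 2 = s ^ ρ := aux_rpow_mul_sq ρ s hρ hs
    nlinarith [Real.rpow_nonneg ht ρ, Real.rpow_nonneg hs (ρ - 2)]

lemma aux_main (ρ s t u : ℝ) (hρ : 2 ≤ ρ) (hs : 0 ≤ s) (ht : 0 ≤ t)
    (hu : 0 ≤ u) (huu : u ≤ s + t) :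
    s ^ (ρ - 2) * (1 + u ^ 2) ≤ 1 + 5 * (s ^ ρ + t ^ ρ) := by
  have h4 : u ^ 2 ≤ 2 * s ^ 2 + 2 * t ^ 2 := by nlinarith [sq_nonneg (s - t), mul_self_le_mul_self hu huu]
  have h5 : (0:ℝ) ≤ s ^ (ρ - 2) := Real.rpow_nonneg hs _
  have e1 := aux_rpow_le_one_add ρ s hρ hs
  have e2 := aux_rpow_mul_sq ρ s hρ hs
  have e3 := aux_rpow_mul_sq_le ρ s t hρ hs ht
  nlinarith [mul_le_mul_of_nonneg_left h4 h5, Real.rpow_nonneg ht ρ,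
    Real.rpow_nonneg hs ρ]

lemma aux_antisym_sum {N : ℕ} (F : Fin N → Fin N → ℝ) (b : Fin N → ℝ)
    (hF : ∀ i j, F j i = - F i j) :
    2 * (∑ i, ∑ j, b i * F i j) = ∑ i, ∑ j, (b i - b j) * F i j := by
  have h : (∑ i, ∑ j, b j * F i j) = - ∑ i, ∑ j, b i * F i j := by
    rw [Finset.sum_comm, ← Finset.sum_neg_distrib]
    refine Finset.sum_congr rfl fun y _ => ?_
    rw [← Finset.sum_neg_distrib]
    refine Finset.sum_congr rfl fun z _ => ?_
    rw [hF y z]; ring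
  have hsplit : (∑ i, ∑ j, (b i - b j) * F i j)
      = (∑ i, ∑ j, b i * F i j) - ∑ i, ∑ j, b j * F i j := by
    rw [← Finset.sum_sub_distrib]
    refine Finset.sum_congr rfl fun i _ => ?_
    rw [← Finset.sum_sub_distrib]
    exact Finset.sum_congr rfl fun j _ => by ring
  rw [hsplit, h]; ring
theorem stmt7 (d l : ℕ)
    (f : EuclideanSpace ℝ (Fin d) → EuclideanSpace ℝ (Fin d) → EuclideanSpace ℝ (Fin d))
    (g : EuclideanSpace ℝ (Fin d) → EuclideanSpace ℝ (Fin d) → EuclideanSpace ℝ (Fin d × Fin l))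
    (L ρ : ℝ) (hL : 0 ≤ L) (hρ : 2 ≤ ρ)
    (hanti : ∀ x y : EuclideanSpace ℝ (Fin d), f x y = - f y x)
    (h1 : ∀ x y : EuclideanSpace ℝ (Fin d),
      ⟪x - y, f x y⟫ + 2 * (ρ - 1) * ‖g x y‖ ^ 2 ≤ L * (1 + ‖x - y‖ ^ 2))
    (h2 : ∀ x y : EuclideanSpace ℝ (Fin d),
      (‖x‖ ^ (ρ - 2) - ‖y‖ ^ (ρ - 2)) * ⟪x + y, f x y⟫ ≤ L * (‖x‖ ^ ρ + ‖y‖ ^ ρ)) :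
    ∃ C > 0, ∀ (N : ℕ) (x : Fin N → EuclideanSpace ℝ (Fin d)),
      (1 / (N : ℝ) ^ 2) *
          ∑ i, ∑ j, ‖x i‖ ^ (ρ - 2) *
            (⟪x i, f (x i) (x j)⟫ + (ρ - 1) * ‖g (x i) (x j)‖ ^ 2)
        ≤ C * (1 + (1 / (N : ℝ)) * ∑ i, ‖x i‖ ^ ρ) := by
  refine ⟨6 * L + 1, by positivity, ?_⟩
  intro N x
  rcases Nat.eq_zero_or_pos N with hN | hN
  · subst hN
    simp
    positivity
  have hN0 : (0:ℝ) < (N : ℝ) := by exact_mod_cast hN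
  have hN' : (N : ℝ) ≠ 0 := ne_of_gt hN0
  set Sρ : ℝ := ∑ i, ‖x i‖ ^ ρ with hSρ
  have hSρ0 : 0 ≤ Sρ :=
    Finset.sum_nonneg fun i _ => Real.rpow_nonneg (norm_nonneg _) _
  -- pointwise key bound
  have key : ∀ i j : Fin N,
      ‖x i‖ ^ (ρ - 2) * (⟪x i, f (x i) (x j)⟫ + (ρ - 1) * ‖g (x i) (x j)‖ ^ 2)
        ≤ (‖x i‖ ^ (ρ - 2)) * ⟪x i + x j, f (x i) (x j)⟫ / 2
          + (L / 2) * (1 + 5 * (‖x i‖ ^ ρ + ‖x j‖ ^ ρ)) := by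
    intro i j
    have hai : (0:ℝ) ≤ ‖x i‖ ^ (ρ - 2) := Real.rpow_nonneg (norm_nonneg _) _
    have hg := h1 (x i) (x j)
    have hnorm : ‖x i‖ ^ (ρ - 2) * (1 + ‖x i - x j‖ ^ 2)
        ≤ 1 + 5 * (‖x i‖ ^ ρ + ‖x j‖ ^ ρ) :=
      aux_main ρ _ _ _ hρ (norm_nonneg _) (norm_nonneg _) (norm_nonneg _) (norm_sub_le _ _)
    have hs : ⟪x i - x j, f (x i) (x j)⟫
        = ⟪x i, f (x i) (x j)⟫ - ⟪x j, f (x i) (x j)⟫ := inner_sub_left _ _ _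
    have hadd : ⟪x i + x j, f (x i) (x j)⟫
        = ⟪x i, f (x i) (x j)⟫ + ⟪x j, f (x i) (x j)⟫ := inner_add_left _ _ _
    have h5 := mul_le_mul_of_nonneg_left hg hai
    have h6 := mul_le_mul_of_nonneg_left hnorm (by linarith : (0:ℝ) ≤ L / 2)
    rw [hs] at h5
    nlinarith [h5, h6, hadd]
  -- bound on the symmetrized f-sum
  have hT : (∑ i, ∑ j, ‖x i‖ ^ (ρ - 2) * ⟪x i + x j, f (x i) (x j)⟫)
      ≤ L * ((N : ℝ) * Sρ) := by
    have hF : ∀ i j : Fin N,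
        ⟪x j + x i, f (x j) (x i)⟫ = - ⟪x i + x j, f (x i) (x j)⟫ := by
      intro i j
      rw [hanti (x j) (x i), inner_neg_right, add_comm (x j) (x i)]
    have hdouble := aux_antisym_sum (fun i j => ⟪x i + x j, f (x i) (x j)⟫)
      (fun i => ‖x i‖ ^ (ρ - 2)) hF
    have hb : (∑ i, ∑ j, (‖x i‖ ^ (ρ - 2) - ‖x j‖ ^ (ρ - 2)) * ⟪x i + x j, f (x i) (x j)⟫)
        ≤ ∑ i : Fin N, ∑ j : Fin N, L * (‖x i‖ ^ ρ + ‖x j‖ ^ ρ) :=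
      Finset.sum_le_sum fun i _ => Finset.sum_le_sum fun j _ => h2 (x i) (x j)
    have hc : (∑ i : Fin N, ∑ j : Fin N, L * (‖x i‖ ^ ρ + ‖x j‖ ^ ρ))
        = 2 * (L * ((N : ℝ) * Sρ)) := by
      have inner_eq : ∀ i : Fin N, (∑ j : Fin N, L * (‖x i‖ ^ ρ + ‖x j‖ ^ ρ))
          = (N : ℝ) * L * ‖x i‖ ^ ρ + L * Sρ := by
        intro i
        rw [Finset.sum_congr rfl fun j _ => show
            L * (‖x i‖ ^ ρ + ‖x j‖ ^ ρ) = L * ‖x i‖ ^ ρ + L * ‖x j‖ ^ ρ by ring]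
        rw [Finset.sum_add_distrib, Finset.sum_const, ← Finset.mul_sum, ← hSρ]
        simp [Finset.card_univ, nsmul_eq_mul]
        ring
      rw [Finset.sum_congr rfl fun i _ => inner_eq i]
      rw [Finset.sum_add_distrib, Finset.sum_const, ← Finset.mul_sum, ← hSρ]
      simp [Finset.card_univ, nsmul_eq_mul]
      ring
    linarith [hb, hdouble.ge, hdouble.le]
  -- sum the key bound
  have hsum : (∑ i, ∑ j, ‖x i‖ ^ (ρ - 2) *
        (⟪x i, f (x i) (x j)⟫ + (ρ - 1) * ‖g (x i) (x j)‖ ^ 2))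
      ≤ (∑ i, ∑ j, ‖x i‖ ^ (ρ - 2) * ⟪x i + x j, f (x i) (x j)⟫) / 2
        + (L / 2) * ((N : ℝ) ^ 2 + 10 * ((N : ℝ) * Sρ)) := by
    have hstep : (∑ i, ∑ j, ‖x i‖ ^ (ρ - 2) *
          (⟪x i, f (x i) (x j)⟫ + (ρ - 1) * ‖g (x i) (x j)‖ ^ 2))
        ≤ ∑ i, ∑ j, ((‖x i‖ ^ (ρ - 2)) * ⟪x i + x j, f (x i) (x j)⟫ / 2
          + (L / 2) * (1 + 5 * (‖x i‖ ^ ρ + ‖x j‖ ^ ρ))) :=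
      Finset.sum_le_sum fun i _ => Finset.sum_le_sum fun j _ => key i j
    have econst : (∑ i : Fin N, ∑ j : Fin N, L / 2 * (1 + 5 * (‖x i‖ ^ ρ + ‖x j‖ ^ ρ)))
        = (L / 2) * ((N : ℝ) ^ 2 + 10 * ((N : ℝ) * Sρ)) := by
      have inner_eq : ∀ i : Fin N,
          (∑ j : Fin N, L / 2 * (1 + 5 * (‖x i‖ ^ ρ + ‖x j‖ ^ ρ)))
            = (N : ℝ) * (L / 2) + (N : ℝ) * (5 * L / 2) * ‖x i‖ ^ ρ + (5 * L / 2) * Sρ := by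
        intro i
        rw [Finset.sum_congr rfl fun j _ => show
            L / 2 * (1 + 5 * (‖x i‖ ^ ρ + ‖x j‖ ^ ρ))
              = (L / 2 + 5 * L / 2 * ‖x i‖ ^ ρ) + 5 * L / 2 * ‖x j‖ ^ ρ by ring]
        rw [Finset.sum_add_distrib, Finset.sum_const, ← Finset.mul_sum, ← hSρ]
        simp [Finset.card_univ, nsmul_eq_mul]
        ring
      rw [Finset.sum_congr rfl fun i _ => inner_eq i]
      rw [Finset.sum_add_distrib, Finset.sum_add_distrib, Finset.sum_const,
        Finset.sum_const, ← Finset.mul_sum, ← hSρ]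
      simp [Finset.card_univ, nsmul_eq_mul]
      ring
    have ediv : (∑ i, ∑ j, (‖x i‖ ^ (ρ - 2)) * ⟪x i + x j, f (x i) (x j)⟫ / 2)
        = (∑ i, ∑ j, ‖x i‖ ^ (ρ - 2) * ⟪x i + x j, f (x i) (x j)⟫) / 2 := by
      rw [Finset.sum_div]
      exact Finset.sum_congr rfl fun i _ => (Finset.sum_div _ _ _).symm
    have hsplit : (∑ i, ∑ j, ((‖x i‖ ^ (ρ - 2)) * ⟪x i + x j, f (x i) (x j)⟫ / 2
          + (L / 2) * (1 + 5 * (‖x i‖ ^ ρ + ‖x j‖ ^ ρ))))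
        = (∑ i, ∑ j, ‖x i‖ ^ (ρ - 2) * ⟪x i + x j, f (x i) (x j)⟫) / 2
          + (L / 2) * ((N : ℝ) ^ 2 + 10 * ((N : ℝ) * Sρ)) := by
      rw [Finset.sum_congr rfl fun i (_ : i ∈ Finset.univ) => Finset.sum_add_distrib,
        Finset.sum_add_distrib, econst, ediv]
    rw [hsplit] at hstep
    exact hstep
  -- final assembly
  have total : (∑ i, ∑ j, ‖x i‖ ^ (ρ - 2) *
        (⟪x i, f (x i) (x j)⟫ + (ρ - 1) * ‖g (x i) (x j)‖ ^ 2))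
      ≤ (L / 2) * (N : ℝ) ^ 2 + (11 * L / 2) * ((N : ℝ) * Sρ) := by
    nlinarith [hsum, hT]
  have hmul := mul_le_mul_of_nonneg_left total
    (by positivity : (0:ℝ) ≤ 1 / (N : ℝ) ^ 2)
  have hid : (1 / (N : ℝ) ^ 2) * ((L / 2) * (N : ℝ) ^ 2 + (11 * L / 2) * ((N : ℝ) * Sρ))
      = L / 2 + (11 * L / 2) * ((1 / (N : ℝ)) * Sρ) := by
    field_simp
  rw [hid] at hmul
  have hq : 0 ≤ (1 / (N : ℝ)) * Sρ := by positivity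
  nlinarith [hmul, hq]
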